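/- Let S be lognormal with log S ~ N(a, b²), b > 0, and K > 0. The variance-minimizing hedge ratio h* = (A₄ − K·A₂ + (A₂+A₃)(K·A₁ − A₂))/(A₄ + A₅ − (A₂+A₃)²) can be rewritten as h* = (e^{b²}Φ(v+b) − Φ(v) − e^{b²/2 − bv}(Φ(v) − Φ(v−b))) / (e^{b²} − 1), where v = b + (a − log K)/b and Φ is the standard normal CDF. -/

import Mathlib

open MeasureTheory ProbabilityTheory Real Set Filter
open scoped NNReal ENNReal

noncomputable def Φ (x : ℝ) : ℝ := ∫ t in Set.Iic x, Real.exp (-t^2/2) / Real.sqrt (2*Real.pi)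

lemma Phi_eq (x : ℝ) : Φ x = ∫ t in Set.Iic x, gaussianPDFReal 0 1 t := by
  unfold Φ
  refine setIntegral_congr_fun measurableSet_Iic fun t _ => ?_
  simp [gaussianPDFReal, div_eq_inv_mul, mul_comm]

lemma pdf_pointwise (α β : ℝ) (z : ℝ) :
    Real.exp (α + β*z) * gaussianPDFReal 0 1 z
      = Real.exp (α + β^2/2) * gaussianPDFReal β 1 z := by
  simp only [gaussianPDFReal, NNReal.coe_one, mul_one, sub_zero]
  rw [mul_left_comm, ← Real.exp_add, mul_left_comm, ← Real.exp_add]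
  congr 1
  rw [Real.exp_eq_exp]
  ring

lemma shiftIic (β c : ℝ) :
    ∫ z in Set.Iic c, gaussianPDFReal β 1 z = Φ (c - β) := by
  have A : MeasurableEmbedding fun x : ℝ => x - β :=
    (Homeomorph.subRight β).isClosedEmbedding.measurableEmbedding
  have h := A.setIntegral_map (μ := volume) (gaussianPDFReal 0 1) (Set.Iic (c - β))
  rw [map_sub_right_eq_self] at h
  have hpre : (fun x : ℝ => x - β) ⁻¹' Set.Iic (c - β) = Set.Iic c := by
    ext x; simp [sub_le_sub_iff_right]
  rw [hpre] at h
  rw [Phi_eq, h]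
  refine setIntegral_congr_fun measurableSet_Iic fun z _ => ?_
  rw [gaussianPDFReal_sub, zero_add]

lemma int_pdf (β : ℝ) : Integrable (fun z => gaussianPDFReal β 1 z) :=
  integrable_gaussianPDFReal β 1

lemma int_exp_pdf (α β : ℝ) :
    Integrable (fun z => Real.exp (α + β*z) * gaussianPDFReal 0 1 z) := by
  have : (fun z => Real.exp (α + β*z) * gaussianPDFReal 0 1 z)
      = fun z => Real.exp (α + β^2/2) * gaussianPDFReal β 1 z := by
    ext z; exact pdf_pointwise α β z
  rw [this]
  exact (integrable_gaussianPDFReal β 1).const_mul _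

lemma gauss_Iic (α β c : ℝ) :
    ∫ z in Set.Iic c, Real.exp (α + β*z) * gaussianPDFReal 0 1 z
      = Real.exp (α + β^2/2) * Φ (c - β) := by
  rw [setIntegral_congr_fun measurableSet_Iic (fun z _ => pdf_pointwise α β z),
    MeasureTheory.integral_const_mul, shiftIic]

lemma gauss_Ioi (α β c : ℝ) :
    ∫ z in Set.Ioi c, Real.exp (α + β*z) * gaussianPDFReal 0 1 z
      = Real.exp (α + β^2/2) * (1 - Φ (c - β)) := by
  have hint := int_exp_pdf α β
  have h := intervalIntegral.integral_Iic_add_Ioi (b := c) hint.integrableOn hint.integrableOn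
  have htot : ∫ z, Real.exp (α + β*z) * gaussianPDFReal 0 1 z
      = Real.exp (α + β^2/2) := by
    have : (fun z => Real.exp (α + β*z) * gaussianPDFReal 0 1 z)
        = fun z => Real.exp (α + β^2/2) * gaussianPDFReal β 1 z := by
      ext z; exact pdf_pointwise α β z
    rw [this, MeasureTheory.integral_const_mul, integral_gaussianPDFReal_eq_one β one_ne_zero, mul_one]
  rw [gauss_Iic] at h
  linarith [h, htot]

lemma Phi_neg (x : ℝ) : Φ (-x) = 1 - Φ x := by
  have heven : ∀ t : ℝ, gaussianPDFReal 0 1 (-t) = gaussianPDFReal 0 1 t := by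
    intro t; simp [gaussianPDFReal, neg_sq]
  have h1 : Φ (-x) = ∫ t in Set.Ioi x, gaussianPDFReal 0 1 t := by
    rw [Phi_eq]
    rw [show ∫ t in Set.Iic (-x), gaussianPDFReal 0 1 t
        = ∫ t in Set.Iic (-x), gaussianPDFReal 0 1 (-t) from
      (setIntegral_congr_fun measurableSet_Iic fun t _ => (heven t).symm)]
    rw [integral_comp_neg_Iic, neg_neg]
  have hint := integrable_gaussianPDFReal (0:ℝ) 1
  have h2 := intervalIntegral.integral_Iic_add_Ioi (b := x) hint.integrableOn hint.integrableOn
  rw [integral_gaussianPDFReal_eq_one 0 one_ne_zero, ← Phi_eq] at h2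
  rw [h1]; linarith

lemma integral_gaussianReal_set (g : ℝ → ℝ) (s : Set ℝ) (hs : MeasurableSet s) :
    ∫ z in s, g z ∂(gaussianReal 0 1) = ∫ z in s, g z * gaussianPDFReal 0 1 z := by
  rw [gaussianReal_of_var_ne_zero 0 one_ne_zero]
  have hd : gaussianPDF 0 1 = fun x => ((Real.toNNReal (gaussianPDFReal 0 1 x) : ℝ≥0) : ℝ≥0∞) := by
    ext x; rfl
  rw [hd, setIntegral_withDensity_eq_setIntegral_smul
    ((measurable_gaussianPDFReal 0 1).real_toNNReal) g hs]
  refine setIntegral_congr_fun hs fun z _ => ?_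
  rw [NNReal.smul_def, Real.coe_toNNReal _ (gaussianPDFReal_nonneg _ _ _), smul_eq_mul, mul_comm]

theorem stmt11 (a b K : ℝ) (hb : 0 < b) (hK : 0 < K)
    (S : ℝ → ℝ) (hS : S = fun z => Real.exp (a + b*z))
    (A1 A2 A3 A4 A5 : ℝ)
    (hA1 : A1 = ((gaussianReal 0 1) {z | K < S z}).toReal)
    (hA2 : A2 = ∫ z in {z | K < S z}, S z ∂(gaussianReal 0 1))
    (hA3 : A3 = ∫ z in {z | S z ≤ K}, S z ∂(gaussianReal 0 1))
    (hA4 : A4 = ∫ z in {z | K < S z}, (S z)^2 ∂(gaussianReal 0 1))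
    (hA5 : A5 = ∫ z in {z | S z ≤ K}, (S z)^2 ∂(gaussianReal 0 1))
    (v : ℝ) (hv : v = b + (a - Real.log K)/b) :
    (A4 - K*A2 + (A2 + A3)*(K*A1 - A2)) / (A4 + A5 - (A2 + A3)^2) =
      (Real.exp (b^2) * Φ (v+b) - Φ v - Real.exp (b^2/2 - b*v) * (Φ v - Φ (v-b))) /
        (Real.exp (b^2) - 1) := by
  set L : ℝ := (Real.log K - a)/b with hL
  have hset1 : {z | K < S z} = Set.Ioi L := by
    ext z
    simp only [hS, Set.mem_setOf_eq, Set.mem_Ioi]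
    rw [hL, div_lt_iff₀ hb, ← Real.log_lt_iff_lt_exp hK]
    constructor <;> intro h <;> linarith [mul_comm z b]
  have hset2 : {z | S z ≤ K} = Set.Iic L := by
    ext z
    simp only [hS, Set.mem_setOf_eq, Set.mem_Iic]
    rw [hL, le_div_iff₀ hb, ← Real.le_log_iff_exp_le hK]
    constructor <;> intro h <;> linarith [mul_comm z b]
  have hLb : L - b = -v := by rw [hL, hv]; field_simp; try ring
  have hL2b : L - 2*b = -(v+b) := by rw [hL, hv]; field_simp; try ring
  have hL0 : L = -(v - b) := by rw [hL, hv]; field_simp; try ring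
  have hSq : ∀ z, (S z)^2 = Real.exp (2*a + (2*b)*z) := by
    intro z; rw [hS]; simp only []
    rw [← Real.exp_nat_mul]; congr 1; push_cast; ring
  -- A1
  have hA1' : A1 = Φ (v - b) := by
    rw [hA1, hset1, gaussianReal_apply_eq_integral 0 one_ne_zero,
      ENNReal.toReal_ofReal (integral_nonneg (fun z => gaussianPDFReal_nonneg _ _ _))]
    have h := gauss_Ioi 0 0 L
    simp only [zero_mul, zero_add, Real.exp_zero, one_mul, ne_eq, OfNat.ofNat_ne_zero,
      not_false_eq_true, zero_pow, zero_div, sub_zero] at h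
    rw [show (∫ z in Set.Ioi L, gaussianPDFReal 0 1 z)
        = ∫ z in Set.Ioi L, Real.exp ((0:ℝ) + 0*z) * gaussianPDFReal 0 1 z from
      (setIntegral_congr_fun measurableSet_Ioi fun z _ => by simp), gauss_Ioi]
    simp only [zero_add, Real.exp_zero, one_mul, sub_zero, zero_pow, zero_div]
    rw [hL0, Phi_neg]; norm_num
  -- A2
  have hA2' : A2 = Real.exp (a + b^2/2) * Φ v := by
    rw [hA2, hset1, integral_gaussianReal_set _ _ measurableSet_Ioi]
    rw [show (∫ z in Set.Ioi L, S z * gaussianPDFReal 0 1 z)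
        = ∫ z in Set.Ioi L, Real.exp (a + b*z) * gaussianPDFReal 0 1 z from
      (setIntegral_congr_fun measurableSet_Ioi fun z _ => by rw [hS]), gauss_Ioi, hLb, Phi_neg]
    ring
  have hA3' : A3 = Real.exp (a + b^2/2) * (1 - Φ v) := by
    rw [hA3, hset2, integral_gaussianReal_set _ _ measurableSet_Iic]
    rw [show (∫ z in Set.Iic L, S z * gaussianPDFReal 0 1 z)
        = ∫ z in Set.Iic L, Real.exp (a + b*z) * gaussianPDFReal 0 1 z from
      (setIntegral_congr_fun measurableSet_Iic fun z _ => by rw [hS]), gauss_Iic, hLb, Phi_neg]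
  have hA4' : A4 = Real.exp (2*a + 2*b^2) * Φ (v + b) := by
    rw [hA4, hset1, integral_gaussianReal_set _ _ measurableSet_Ioi]
    rw [show (∫ z in Set.Ioi L, (S z)^2 * gaussianPDFReal 0 1 z)
        = ∫ z in Set.Ioi L, Real.exp (2*a + (2*b)*z) * gaussianPDFReal 0 1 z from
      (setIntegral_congr_fun measurableSet_Ioi fun z _ => by rw [hSq]), gauss_Ioi, hL2b, Phi_neg]
    rw [show 2*a + (2*b)^2/2 = 2*a + 2*b^2 by ring]; ring
  have hA5' : A5 = Real.exp (2*a + 2*b^2) * (1 - Φ (v + b)) := by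
    rw [hA5, hset2, integral_gaussianReal_set _ _ measurableSet_Iic]
    rw [show (∫ z in Set.Iic L, (S z)^2 * gaussianPDFReal 0 1 z)
        = ∫ z in Set.Iic L, Real.exp (2*a + (2*b)*z) * gaussianPDFReal 0 1 z from
      (setIntegral_congr_fun measurableSet_Iic fun z _ => by rw [hSq]), gauss_Iic, hL2b, Phi_neg]
    rw [show 2*a + (2*b)^2/2 = 2*a + 2*b^2 by ring]
  -- algebra
  set C : ℝ := Real.exp (2*a + b^2) with hC
  have hF : Real.exp (2*a + 2*b^2) = C * Real.exp (b^2) := by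
    rw [hC, ← Real.exp_add]; ring_nf
  have hE2 : Real.exp (a + b^2/2) * Real.exp (a + b^2/2) = C := by
    rw [hC, ← Real.exp_add]; ring_nf
  have hKE : K * Real.exp (a + b^2/2) = C * Real.exp (b^2/2 - b*v) := by
    rw [hC, ← Real.exp_add, ← Real.exp_log hK, ← Real.exp_add, Real.exp_eq_exp, hv]
    field_simp; try ring
  rw [hA1', hA2', hA3', hA4', hA5']
  have hnum : Real.exp (2*a + 2*b^2) * Φ (v + b) - K * (Real.exp (a + b^2/2) * Φ v)
      + (Real.exp (a + b^2/2) * Φ v + Real.exp (a + b^2/2) * (1 - Φ v))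
        * (K * Φ (v - b) - Real.exp (a + b^2/2) * Φ v)
      = C * (Real.exp (b^2) * Φ (v+b) - Φ v
          - Real.exp (b^2/2 - b*v) * (Φ v - Φ (v-b))) := by
    have e1 : Real.exp (a + b^2/2) * Φ v + Real.exp (a + b^2/2) * (1 - Φ v)
        = Real.exp (a + b^2/2) := by ring
    rw [e1]
    linear_combination (Φ (v+b)) * hF + (Φ (v-b) - Φ v) * hKE + (- Φ v) * hE2
  have hden : Real.exp (2*a + 2*b^2) * Φ (v + b) + Real.exp (2*a + 2*b^2) * (1 - Φ (v + b))
      - (Real.exp (a + b^2/2) * Φ v + Real.exp (a + b^2/2) * (1 - Φ v))^2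
      = C * (Real.exp (b^2) - 1) := by
    linear_combination hF - hE2
  rw [hnum, hden, mul_div_mul_left _ _ (Real.exp_ne_zero _)]
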